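/- Let (R,m) be a Noetherian local ring and {I_n}, {J_n} filtrations with J_n ⊆ I_n and λ_R(I_n/J_n) < ∞ for all n ≥ 1. Then for each n there is a short exact sequence 0 → I_n/J_n → H^0_m(R/J_n) → H^0_m(R/I_n) → 0 of R-modules; in particular λ_R(H^0_m(R/J_n)) = λ_R(H^0_m(R/I_n)) + λ_R(I_n/J_n). -/

import Mathlib

/-- The saturation `I : J^∞ = ⋃ₖ (I : Jᵏ)`. -/
noncomputable def sat {A : Type*} [CommRing A] (I J : Ideal A) : Ideal A :=
  ⨆ n : ℕ, Submodule.colon I ((J ^ n : Ideal A) : Set A)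

/-- The quotient module `S/I` of two ideals (with `I ⊆ S` in the intended use). -/
noncomputable abbrev idealQuot {A : Type*} [CommRing A] (S I : Ideal A) :=
  S ⧸ (Submodule.comap S.subtype I)

/-- The length of a module, expressed as the Krull dimension of its submodule lattice. -/
noncomputable def mlength (R M : Type*) [CommRing R] [AddCommGroup M] [Module R M] : ℕ∞ :=
  (Order.krullDim (Submodule R M)).unbotD 0

/-- The zeroth local cohomology `H⁰_m(M)`: the submodule of elements annihilated by some
power of `m`. -/
noncomputable def H0 {R : Type*} (M : Type*) [CommRing R] [AddCommGroup M] [Module R M]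
    (m : Ideal R) : Submodule R M :=
  ⨆ n : ℕ, Submodule.torsionBySet R M ↑(m ^ n)

/-! ### Auxiliary lemmas -/

section LatticeSplit

open Order

variable {α : Type*} [Lattice α] [IsModularLattice α]

/-- Given a chain in a modular lattice, we can produce chains below and above a fixed element
`a` whose total length is at least the length of the original chain. -/
lemma exists_chains_aux (a : α) :
    ∀ (n : ℕ) (r : LTSeries α), r.length = n →
    ∃ (p : LTSeries {x : α // x ≤ a}) (q : LTSeries {x : α // a ≤ x}),
      p.last = ⟨r.last ⊓ a, inf_le_right⟩ ∧ q.last = ⟨r.last ⊔ a, le_sup_right⟩ ∧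
      r.length ≤ p.length + q.length := by
  intro n
  induction n with
  | zero =>
    intro r hr
    exact ⟨RelSeries.singleton _ _, RelSeries.singleton _ _, rfl, rfl, by omega⟩
  | succ n ih =>
    intro r hr
    obtain ⟨p, q, hp, hq, hlen⟩ := ih r.eraseLast (by simp [RelSeries.eraseLast_length, hr])
    have hxy : r.eraseLast.last < r.last := r.eraseLast_last_rel_last (by omega)
    set x := r.eraseLast.last with hxdef
    set y := r.last with hydef
    have herl : r.eraseLast.length = n := by simp [RelSeries.eraseLast_length, hr]
    rcases lt_or_eq_of_le (inf_le_inf_right a hxy.le) with hinf | hinf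
    · have hps : p.last < (⟨y ⊓ a, inf_le_right⟩ : {x : α // x ≤ a}) := by
        rw [hp]; exact Subtype.mk_lt_mk.2 hinf
      rcases lt_or_eq_of_le (sup_le_sup_right hxy.le a) with hsup | hsup
      · refine ⟨p.snoc _ hps,
          q.snoc ⟨y ⊔ a, le_sup_right⟩ (by rw [hq]; show (_ : {x : α // a ≤ x}) < _; exact Subtype.mk_lt_mk.2 hsup),
          RelSeries.last_snoc _ _ _, RelSeries.last_snoc _ _ _, ?_⟩
        simp only [RelSeries.snoc_length]
        omega
      · refine ⟨p.snoc _ hps, q, RelSeries.last_snoc _ _ _, by rw [hq]; exact Subtype.ext hsup, ?_⟩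
        simp only [RelSeries.snoc_length]
        omega
    · have hqs : q.last < (⟨y ⊔ a, le_sup_right⟩ : {x : α // a ≤ x}) := by
        rw [hq]
        exact Subtype.mk_lt_mk.2 (sup_lt_sup_of_lt_of_inf_le_inf hxy (le_of_eq hinf.symm))
      refine ⟨p, q.snoc _ hqs, by rw [hp]; exact Subtype.ext hinf, RelSeries.last_snoc _ _ _, ?_⟩
      simp only [RelSeries.snoc_length]
      omega

/-- Additivity of the Krull dimension of a modular lattice along an element `a`. -/
lemma krullDim_split (a : α) :
    krullDim α = krullDim {x : α // a ≤ x} + krullDim {x : α // x ≤ a} := by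
  have : Nonempty α := ⟨a⟩
  have h1 : Nonempty {x : α // a ≤ x} := ⟨⟨a, le_refl a⟩⟩
  have h2 : Nonempty {x : α // x ≤ a} := ⟨⟨a, le_refl a⟩⟩
  rw [krullDim_eq_iSup_length, krullDim_eq_iSup_length, krullDim_eq_iSup_length,
    ← WithBot.coe_add, WithBot.coe_inj]
  apply le_antisymm
  · apply iSup_le
    intro r
    obtain ⟨p, q, _, _, hlen⟩ := exists_chains_aux a r.length r rfl
    calc (r.length : ℕ∞) ≤ (q.length : ℕ∞) + (p.length : ℕ∞) := by exact_mod_cast by omega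
    _ ≤ _ := add_le_add (le_iSup (fun q : LTSeries {x : α // a ≤ x} => (q.length : ℕ∞)) q)
        (le_iSup (fun p : LTSeries {x : α // x ≤ a} => (p.length : ℕ∞)) p)
  · apply ENat.iSup_add_iSup_le
    intro q p
    have hcoe1 : StrictMono (fun z : {x : α // a ≤ x} => (z : α)) := fun _ _ h => h
    have hcoe2 : StrictMono (fun z : {x : α // x ≤ a} => (z : α)) := fun _ _ h => h
    set p' := p.map _ hcoe2 with hp'
    set q' := q.map _ hcoe1 with hq'
    have hle : p'.last ≤ q'.head := le_trans p.last.2 q.head.2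
    rcases eq_or_lt_of_le hle with h | h
    · refine le_trans ?_ (le_iSup (fun r : LTSeries α => (r.length : ℕ∞)) (p'.smash q' h))
      have : (p'.smash q' h).length = p.length + q.length := rfl
      rw [this]
      exact_mod_cast by omega
    · refine le_trans ?_ (le_iSup (fun r : LTSeries α => (r.length : ℕ∞)) (p'.append q' h))
      have : (p'.append q' h).length = p.length + q.length + 1 := rfl
      rw [this]
      exact_mod_cast by omega

end LatticeSplit

section ModuleLength

variable {R : Type*} [CommRing R]

lemma mlength_congr {M N : Type*} [AddCommGroup M] [Module R M] [AddCommGroup N] [Module R N]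
    (e : M ≃ₗ[R] N) : mlength R M = mlength R N := by
  unfold mlength
  rw [Order.krullDim_eq_of_orderIso (Submodule.orderIsoMapComap e)]

/-- Additivity of `mlength` for a submodule and the corresponding quotient. -/
lemma mlength_split {M : Type*} [AddCommGroup M] [Module R M] (N : Submodule R M) :
    mlength R M = mlength R (M ⧸ N) + mlength R N := by
  have h := krullDim_split N
  change _ = Order.krullDim (Set.Ici N) + _ at h
  rw [← Order.krullDim_eq_of_orderIso (Submodule.comapMkQRelIso N),
    ← Order.krullDim_eq_of_orderIso (Submodule.MapSubtype.orderIso N)] at h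
  have h1 : Order.krullDim (Submodule R (M ⧸ N)) ≠ ⊥ :=
    (lt_of_lt_of_le (by exact WithBot.bot_lt_coe 0) Order.krullDim_nonneg).ne'
  have h2 : Order.krullDim (Submodule R N) ≠ ⊥ :=
    (lt_of_lt_of_le (by exact WithBot.bot_lt_coe 0) Order.krullDim_nonneg).ne'
  obtain ⟨b, hb⟩ := WithBot.ne_bot_iff_exists.mp h1
  obtain ⟨c, hc⟩ := WithBot.ne_bot_iff_exists.mp h2
  unfold mlength
  rw [h, ← hb, ← hc, ← WithBot.coe_add, WithBot.unbotD_coe, WithBot.unbotD_coe,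
    WithBot.unbotD_coe]

/-- Additivity of `mlength` along a short exact sequence. -/
lemma mlength_of_exact {A B C : Type*} [AddCommGroup A] [Module R A] [AddCommGroup B] [Module R B]
    [AddCommGroup C] [Module R C] (f : A →ₗ[R] B) (g : B →ₗ[R] C)
    (hf : Function.Injective f) (hg : Function.Surjective g) (hfg : Function.Exact f g) :
    mlength R B = mlength R C + mlength R A := by
  have h := mlength_split (LinearMap.range f)
  rw [← mlength_congr (LinearEquiv.ofInjective f hf)] at h
  have hker : LinearMap.ker g = LinearMap.range f := LinearMap.exact_iff.mp hfg
  have e : (B ⧸ LinearMap.range f) ≃ₗ[R] C :=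
    (Submodule.quotEquivOfEq _ _ hker.symm).trans (g.quotKerEquivOfSurjective hg)
  rwa [mlength_congr e] at h

/-- A finite length module over a local ring is annihilated by a power of the maximal ideal. -/
lemma pow_ann_of_finLength [IsLocalRing R] {M : Type*} [AddCommGroup M] [Module R M]
    (h : IsFiniteLength R M) :
    ∃ k : ℕ, (IsLocalRing.maximalIdeal R) ^ k ≤ Module.annihilator R M := by
  induction h with
  | of_subsingleton =>
    exact ⟨0, fun a _ => Module.mem_annihilator.2 fun x => by
      rw [Subsingleton.elim x 0, smul_zero]⟩
  | @of_simple_quotient M _ _ N _ _ ih =>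
    obtain ⟨k, hk⟩ := ih
    have hm : IsLocalRing.maximalIdeal R ≤ Module.annihilator R (M ⧸ N) :=
      (IsLocalRing.eq_maximalIdeal IsSimpleModule.annihilator_isMaximal).ge
    refine ⟨k + 1, ?_⟩
    rw [pow_succ]
    refine (Ideal.mul_le).2 fun c hc b hb => Module.mem_annihilator.2 fun x => ?_
    have hbx : b • x ∈ N := by
      have := Module.mem_annihilator.1 (hm hb) (Submodule.Quotient.mk (p := N) x)
      rwa [← Submodule.Quotient.mk_smul, Submodule.Quotient.mk_eq_zero] at this
    have := Module.mem_annihilator.1 (hk hc) (⟨b • x, hbx⟩ : N)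
    rw [mul_smul]
    exact congrArg Subtype.val this

end ModuleLength

lemma mem_H0_iff {R M : Type*} [CommRing R] [AddCommGroup M] [Module R M] (m : Ideal R) (x : M) :
    x ∈ H0 M m ↔ ∃ k : ℕ, ∀ c ∈ m ^ k, c • x = 0 := by
  rw [H0, Submodule.mem_iSup_of_directed]
  · constructor
    · rintro ⟨k, hk⟩
      exact ⟨k, fun c hc => (Submodule.mem_torsionBySet_iff _ _).1 hk ⟨c, hc⟩⟩
    · rintro ⟨k, hk⟩
      exact ⟨k, (Submodule.mem_torsionBySet_iff _ _).2 fun c => hk c c.2⟩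
  · intro i j
    exact ⟨max i j,
      Submodule.torsionBySet_le_torsionBySet_of_subset
        (fun _ hz => Ideal.pow_le_pow_right (le_max_left i j) hz),
      Submodule.torsionBySet_le_torsionBySet_of_subset
        (fun _ hz => Ideal.pow_le_pow_right (le_max_right i j) hz)⟩

/-- if `(R,m)` is Noetherian local and `{I_n}`, `{J_n}` are filtrations with
`J_n ⊆ I_n` and `λ_R(I_n/J_n) < ∞` for `n ≥ 1`, then for each `n` there is a short exact
sequence `0 → I_n/J_n → H⁰_m(R/J_n) → H⁰_m(R/I_n) → 0`, and in particular
`λ_R(H⁰_m(R/J_n)) = λ_R(H⁰_m(R/I_n)) + λ_R(I_n/J_n)`. -/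
theorem stmt6 {R : Type*} [CommRing R] [IsNoetherianRing R] [IsLocalRing R]
    (I J : ℕ → Ideal R) (hI0 : I 0 = ⊤) (hJ0 : J 0 = ⊤)
    (hIanti : ∀ m n, m ≤ n → I n ≤ I m) (hJanti : ∀ m n, m ≤ n → J n ≤ J m)
    (hImul : ∀ m n, I m * I n ≤ I (m + n)) (hJmul : ∀ m n, J m * J n ≤ J (m + n))
    (hJI : ∀ n, J n ≤ I n)
    (hfin : ∀ n, 1 ≤ n → IsFiniteLength R (idealQuot (I n) (J n))) :
    ∀ n, 1 ≤ n →
      ∃ (f : idealQuot (I n) (J n) →ₗ[R] ↥(H0 (R ⧸ J n) (IsLocalRing.maximalIdeal R)))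
        (g : ↥(H0 (R ⧸ J n) (IsLocalRing.maximalIdeal R)) →ₗ[R]
          ↥(H0 (R ⧸ I n) (IsLocalRing.maximalIdeal R))),
        Function.Injective f ∧ Function.Surjective g ∧ Function.Exact f g ∧
        mlength R (↥(H0 (R ⧸ J n) (IsLocalRing.maximalIdeal R)))
          = mlength R (↥(H0 (R ⧸ I n) (IsLocalRing.maximalIdeal R)))
            + mlength R (idealQuot (I n) (J n)) := by
  intro n hn
  set mI := IsLocalRing.maximalIdeal R with hmI
  have hle : J n ≤ I n := hJI n
  obtain ⟨t, ht⟩ := pow_ann_of_finLength (hfin n hn)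
  have htI : ∀ c ∈ mI ^ t, ∀ b ∈ I n, c * b ∈ J n := by
    intro c hc b hb
    have h1 := Module.mem_annihilator.1 (ht hc)
      (Submodule.Quotient.mk (p := Submodule.comap (I n).subtype (J n)) (⟨b, hb⟩ : I n))
    rw [← Submodule.Quotient.mk_smul, Submodule.Quotient.mk_eq_zero] at h1
    simpa [Submodule.mem_comap, smul_eq_mul] using h1
  -- the injection f
  have hKer : Submodule.comap (I n).subtype (J n)
      ≤ LinearMap.ker (((J n).mkQ).comp (I n).subtype) := by
    intro x hx
    simp only [LinearMap.mem_ker, LinearMap.comp_apply, Submodule.mkQ_apply,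
      Submodule.Quotient.mk_eq_zero]
    exact hx
  set f0 : idealQuot (I n) (J n) →ₗ[R] R ⧸ J n :=
    Submodule.liftQ (Submodule.comap (I n).subtype (J n)) _ hKer with hf0
  have hf0inj : Function.Injective f0 := by
    rw [← LinearMap.ker_eq_bot, hf0]
    apply Submodule.ker_liftQ_eq_bot
    intro x hx
    simpa only [LinearMap.mem_ker, LinearMap.comp_apply, Submodule.mkQ_apply,
      Submodule.Quotient.mk_eq_zero, Submodule.mem_comap] using hx
  have hrange : LinearMap.range f0 = Submodule.map (J n).mkQ (I n) := by
    rw [hf0, Submodule.range_liftQ, LinearMap.range_comp, Submodule.range_subtype]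
  have hmem : ∀ x : idealQuot (I n) (J n), f0 x ∈ H0 (R ⧸ J n) mI := by
    intro x
    have hx : f0 x ∈ Submodule.map (J n).mkQ (I n) := hrange ▸ LinearMap.mem_range_self f0 x
    obtain ⟨b, hb, heq⟩ := hx
    rw [← heq, mem_H0_iff]
    refine ⟨t, fun c hc => ?_⟩
    rw [Submodule.mkQ_apply, ← Submodule.Quotient.mk_smul, Submodule.Quotient.mk_eq_zero]
    simpa [smul_eq_mul] using htI c hc b hb
  set f := f0.codRestrict (H0 (R ⧸ J n) mI) hmem with hf
  -- the surjection g
  set q : (R ⧸ J n) →ₗ[R] R ⧸ I n :=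
    Submodule.liftQ (J n) (I n).mkQ (by rw [Submodule.ker_mkQ]; exact hle) with hqdef
  have hq0 : ∀ x ∈ H0 (R ⧸ J n) mI, q x ∈ H0 (R ⧸ I n) mI := by
    intro x hx
    rw [mem_H0_iff] at hx ⊢
    obtain ⟨k, hk⟩ := hx
    exact ⟨k, fun c hc => by rw [← map_smul, hk c hc, map_zero]⟩
  set g := LinearMap.restrict q hq0 with hg
  have hkerq : LinearMap.ker q = LinearMap.range f0 := by
    rw [hqdef, Submodule.ker_liftQ, Submodule.ker_mkQ, hrange]
  have hinj : Function.Injective f := by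
    intro x y hxy
    apply hf0inj
    have h2 := congrArg Subtype.val hxy
    simpa only [hf, LinearMap.codRestrict_apply] using h2
  have hsurj : Function.Surjective g := by
    rintro ⟨y, hy⟩
    obtain ⟨k, hk⟩ := (mem_H0_iff _ _).1 hy
    obtain ⟨r, hr⟩ := Submodule.mkQ_surjective (I n) y
    have hxH : (J n).mkQ r ∈ H0 (R ⧸ J n) mI := by
      rw [mem_H0_iff]
      refine ⟨t + k, fun c hc => ?_⟩
      rw [Submodule.mkQ_apply, ← Submodule.Quotient.mk_smul, Submodule.Quotient.mk_eq_zero]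
      have hcol : mI ^ (t + k) ≤ (J n).colon (Ideal.span {r}) := by
        rw [pow_add]
        refine Ideal.mul_le.2 fun d hd e he => ?_
        rw [Ideal.mem_colon_span_singleton, mul_assoc]
        apply htI d hd
        have h2 := hk e he
        rw [← hr, Submodule.mkQ_apply, ← Submodule.Quotient.mk_smul,
          Submodule.Quotient.mk_eq_zero] at h2
        simpa [smul_eq_mul] using h2
      have := hcol hc
      rw [Ideal.mem_colon_span_singleton] at this
      simpa [smul_eq_mul] using this
    refine ⟨⟨(J n).mkQ r, hxH⟩, ?_⟩
    apply Subtype.ext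
    rw [hg, LinearMap.restrict_coe_apply]
    exact hr
  have hexact : Function.Exact f g := by
    intro y
    have key1 : (g y = 0) ↔ (y : R ⧸ J n) ∈ LinearMap.range f0 := by
      rw [← hkerq, LinearMap.mem_ker]
      constructor
      · intro h0
        have : ((g y : H0 (R ⧸ I n) mI) : R ⧸ I n) = 0 := by rw [h0]; rfl
        rwa [hg, LinearMap.restrict_coe_apply] at this
      · intro h0
        apply Subtype.ext
        rw [hg, LinearMap.restrict_coe_apply, h0]; rfl
    rw [key1]
    constructor
    · rintro ⟨x, hx⟩
      refine ⟨x, Subtype.ext ?_⟩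
      rw [hf, LinearMap.codRestrict_apply, hx]
    · rintro ⟨x, rfl⟩
      exact ⟨x, rfl⟩
  exact ⟨f, g, hinj, hsurj, hexact, mlength_of_exact f g hinj hsurj hexact⟩
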